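/- Let X and Y be normed spaces over ℂ, let Ψ : X → Y be a continuous linear map with ‖Ψ‖ ≤ 1, and let c > 0 be such that ‖Ψ(x)‖ ≥ c·‖x‖ for all x ∈ X. If u ∈ X satisfies ‖u‖ = 1 and ‖Ψ(u)‖ = 1, then c · n(Y; Ψ(u)) ≤ n(X; u). -/

import Mathlib

/-- `S(X;u)`: the set of norm-one continuous linear functionals attaining value `1` at `u`. -/
def geomStates {X : Type*} [NormedAddCommGroup X] [NormedSpace ℂ X] (u : X) :
    Set (X →L[ℂ] ℂ) :=
  {f | ‖f‖ = 1 ∧ f u = 1}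

/-- `γ^u(x) = sup {|f(x)| : f ∈ S(X;u)}`. -/
noncomputable def geomGamma {X : Type*} [NormedAddCommGroup X] [NormedSpace ℂ X]
    (u x : X) : ℝ :=
  sSup {r : ℝ | ∃ f ∈ geomStates u, r = ‖f x‖}

/-- `n(X;u) = inf {γ^u(x) : ‖x‖ = 1}`. -/
noncomputable def geomN {X : Type*} [NormedAddCommGroup X] [NormedSpace ℂ X] (u : X) : ℝ :=
  sInf {r : ℝ | ∃ x : X, ‖x‖ = 1 ∧ r = geomGamma u x}

section aux

variable {X : Type*} [NormedAddCommGroup X] [NormedSpace ℂ X]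

lemma geomGamma_bddAbove (u x : X) :
    BddAbove {r : ℝ | ∃ f ∈ geomStates u, r = ‖f x‖} := by
  refine ⟨‖x‖, ?_⟩
  rintro r ⟨f, ⟨hf, _⟩, rfl⟩
  calc ‖f x‖ ≤ ‖f‖ * ‖x‖ := f.le_opNorm x
    _ = ‖x‖ := by rw [hf, one_mul]

lemma le_geomGamma (u x : X) {f : X →L[ℂ] ℂ} (hf : f ∈ geomStates u) :
    ‖f x‖ ≤ geomGamma u x :=
  le_csSup (geomGamma_bddAbove u x) ⟨f, hf, rfl⟩

lemma geomGamma_nonneg (u x : X) (h : (geomStates u).Nonempty) : 0 ≤ geomGamma u x := by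
  obtain ⟨f, hf⟩ := h
  exact (norm_nonneg (f x)).trans (le_geomGamma u x hf)

lemma geomStates_nonempty (u : X) (hu : ‖u‖ = 1) : (geomStates u).Nonempty := by
  have hu0 : u ≠ 0 := by intro h; rw [h, norm_zero] at hu; norm_num at hu
  obtain ⟨f, hf1, hf2⟩ := exists_dual_vector ℂ u (norm_ne_zero_iff.mpr hu0)
  exact ⟨f, hf1, by rw [hf2, hu]; norm_num⟩

lemma geomN_le (u x : X) (hne : (geomStates u).Nonempty) (hx : ‖x‖ = 1) :
    geomN u ≤ geomGamma u x := by
  refine csInf_le ⟨0, ?_⟩ ⟨x, hx, rfl⟩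
  rintro r ⟨z, hz, rfl⟩
  exact geomGamma_nonneg u z hne

lemma geomN_nonneg (u : X) (hne : (geomStates u).Nonempty) : 0 ≤ geomN u := by
  apply Real.sInf_nonneg
  rintro r ⟨z, hz, rfl⟩
  exact geomGamma_nonneg u z hne

end aux

theorem geomN_le_of_contractive_topological_injection
    {X Y : Type*} [NormedAddCommGroup X] [NormedSpace ℂ X]
    [NormedAddCommGroup Y] [NormedSpace ℂ Y]
    (Ψ : X →L[ℂ] Y) (hΨ : ‖Ψ‖ ≤ 1) (c : ℝ) (hc : 0 < c)
    (hinj : ∀ x : X, c * ‖x‖ ≤ ‖Ψ x‖)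
    (u : X) (hu : ‖u‖ = 1) (hΨu : ‖Ψ u‖ = 1) :
    c * geomN (Ψ u) ≤ geomN u := by
  have hSY : (geomStates (Ψ u)).Nonempty := geomStates_nonempty _ hΨu
  have hSX : (geomStates u).Nonempty := geomStates_nonempty _ hu
  have hcomp : ∀ g ∈ geomStates (Ψ u), g.comp Ψ ∈ geomStates u := by
    rintro g ⟨hg1, hg2⟩
    have happ : (g.comp Ψ) u = 1 := by simp [hg2]
    refine ⟨le_antisymm ?_ ?_, happ⟩
    · calc ‖g.comp Ψ‖ ≤ ‖g‖ * ‖Ψ‖ := g.opNorm_comp_le Ψ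
        _ ≤ 1 := by rw [hg1, one_mul]; exact hΨ
    · have h1 := (g.comp Ψ).le_opNorm u
      rw [happ, hu, mul_one] at h1
      simpa using h1
  refine le_csInf ⟨geomGamma u u, u, hu, rfl⟩ ?_
  rintro r ⟨x, hx, rfl⟩
  have hyx : c ≤ ‖Ψ x‖ := by have := hinj x; rwa [hx, mul_one] at this
  have hy : 0 < ‖Ψ x‖ := lt_of_lt_of_le hc hyx
  set y := Ψ x with hydef
  set y' : Y := ((‖y‖ : ℂ)⁻¹) • y with hy'def
  have hy'norm : ‖y'‖ = 1 := by
    rw [hy'def, norm_smul]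
    simp [hy.ne']
  -- step 1 : γ^{Ψu}(y) ≤ γ^u(x)
  have step1 : geomGamma (Ψ u) y ≤ geomGamma u x := by
    refine csSup_le ⟨‖hSY.choose y‖, hSY.choose, hSY.choose_spec, rfl⟩ ?_
    rintro r ⟨g, hg, rfl⟩
    have := le_geomGamma u x (hcomp g hg)
    simpa using this
  -- step 2 : ‖y‖ * γ^{Ψu}(y') ≤ γ^{Ψu}(y)
  have step2 : ‖y‖ * geomGamma (Ψ u) y' ≤ geomGamma (Ψ u) y := by
    rw [mul_comm, ← le_div_iff₀ hy]
    refine csSup_le ⟨‖hSY.choose y'‖, hSY.choose, hSY.choose_spec, rfl⟩ ?_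
    rintro r ⟨g, hg, rfl⟩
    have hval : ‖g y'‖ = ‖g y‖ / ‖y‖ := by
      rw [hy'def, map_smul, norm_smul]
      simp [div_eq_inv_mul]
    rw [hval]
    exact div_le_div_of_nonneg_right (le_geomGamma _ _ hg) hy.le
  -- step 3 : n(Y;Ψu) ≤ γ^{Ψu}(y')
  have step3 : geomN (Ψ u) ≤ geomGamma (Ψ u) y' := geomN_le _ _ hSY hy'norm
  calc c * geomN (Ψ u) ≤ ‖y‖ * geomN (Ψ u) :=
        mul_le_mul_of_nonneg_right hyx (geomN_nonneg _ hSY)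
    _ ≤ ‖y‖ * geomGamma (Ψ u) y' := by
        exact mul_le_mul_of_nonneg_left step3 (le_of_lt hy)
    _ ≤ geomGamma (Ψ u) y := step2
    _ ≤ geomGamma u x := step1
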